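/- Let I ⊆ ℝ be an interval, κ, τ : I → ℝ continuous, and c₀, c₁, c₂ ∈ ℝ. Set m₀(s) = s + c₀, let F : I → ℝ be an antiderivative of τ, let P be an antiderivative of s ↦ κ(s)(s + c₀)e^{−F(s)} and Q an antiderivative of s ↦ κ(s)(s + c₀)e^{F(s)}, and define m₁(s) = −c₁e^{F(s)} + c₂e^{−F(s)} − (1/2)e^{F(s)}P(s) − (1/2)e^{−F(s)}Q(s) and m₂(s) = c₁e^{F(s)} + c₂e^{−F(s)} + (1/2)e^{F(s)}P(s) − (1/2)e^{−F(s)}Q(s). Then for all s ∈ I: m₀'(s) = 1, m₁'(s) + κ(s)m₀(s) + τ(s)m₂(s) = 0, and m₂'(s) + τ(s)m₁(s) = 0. Conversely, any pair of differentiable functions m₁, m₂ : I → ℝ satisfying m₁' + κm₀ + τm₂ = 0 and m₂' + τm₁ = 0 with m₀(s) = s + c₀ is of this form for some constants c₁, c₂. -/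

import Mathlib

private lemma const_of_deriv_zero {I : Set ℝ} (hI : Convex ℝ I) {g : ℝ → ℝ}
    (hg : ∀ s ∈ I, HasDerivAt g 0 s) {x y : ℝ} (hx : x ∈ I) (hy : y ∈ I) : g x = g y := by
  have := hI.norm_image_sub_le_of_norm_hasDerivWithin_le (f' := fun _ : ℝ => (0 : ℝ)) (C := 0)
    (fun s hs => (hg s hs).hasDerivWithinAt) (fun s hs => by simp) hy hx
  simp only [zero_mul, norm_le_zero_iff, sub_eq_zero] at this
  exact this

/-- Explicit general solution of the linear system
`m₀' = 1`, `m₁' + κ m₀ + τ m₂ = 0`, `m₂' + τ m₁ = 0` satisfied by the Frenet components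
of the position vector of an admissible spacelike curve in pseudo-Galilean space,
where `F` is an antiderivative of `τ`, `P` of `s ↦ κ s (s + c₀) e^{-F s}` and
`Q` of `s ↦ κ s (s + c₀) e^{F s}`. -/
theorem stmt_1
    (I : Set ℝ) (hIconv : Convex ℝ I)
    (κ τ : ℝ → ℝ) (hκ : ContinuousOn κ I) (hτ : ContinuousOn τ I)
    (c₀ : ℝ) (F P Q : ℝ → ℝ)
    (hF : ∀ s ∈ I, HasDerivAt F (τ s) s)
    (hP : ∀ s ∈ I, HasDerivAt P (κ s * (s + c₀) * Real.exp (-F s)) s)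
    (hQ : ∀ s ∈ I, HasDerivAt Q (κ s * (s + c₀) * Real.exp (F s)) s) :
    (∀ c₁ c₂ : ℝ, ∀ s ∈ I,
        HasDerivAt (fun t : ℝ => t + c₀) 1 s ∧
        HasDerivAt (fun t : ℝ => -c₁ * Real.exp (F t) + c₂ * Real.exp (-F t)
            - (1/2) * Real.exp (F t) * P t - (1/2) * Real.exp (-F t) * Q t)
          (-(κ s * (s + c₀)) - τ s *
            (c₁ * Real.exp (F s) + c₂ * Real.exp (-F s)
              + (1/2) * Real.exp (F s) * P s - (1/2) * Real.exp (-F s) * Q s)) s ∧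
        HasDerivAt (fun t : ℝ => c₁ * Real.exp (F t) + c₂ * Real.exp (-F t)
            + (1/2) * Real.exp (F t) * P t - (1/2) * Real.exp (-F t) * Q t)
          (-(τ s *
            (-c₁ * Real.exp (F s) + c₂ * Real.exp (-F s)
              - (1/2) * Real.exp (F s) * P s - (1/2) * Real.exp (-F s) * Q s))) s) ∧
    (∀ m₁ m₂ : ℝ → ℝ,
      (∀ s ∈ I, HasDerivAt m₁ (-(κ s * (s + c₀)) - τ s * m₂ s) s) →
      (∀ s ∈ I, HasDerivAt m₂ (-(τ s * m₁ s)) s) →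
      ∃ c₁ c₂ : ℝ, ∀ s ∈ I,
        m₁ s = -c₁ * Real.exp (F s) + c₂ * Real.exp (-F s)
          - (1/2) * Real.exp (F s) * P s - (1/2) * Real.exp (-F s) * Q s ∧
        m₂ s = c₁ * Real.exp (F s) + c₂ * Real.exp (-F s)
          + (1/2) * Real.exp (F s) * P s - (1/2) * Real.exp (-F s) * Q s) := by
  constructor
  · intro c₁ c₂ s hs
    have hE : HasDerivAt (fun t => Real.exp (F t)) (τ s * Real.exp (F s)) s := by
      simpa [mul_comm] using (hF s hs).exp
    have hEn : HasDerivAt (fun t => Real.exp (-F t)) (-τ s * Real.exp (-F s)) s := by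
      simpa [mul_comm] using ((hF s hs).neg).exp
    have hps := hP s hs
    have hqs := hQ s hs
    have hEP : HasDerivAt (fun t => Real.exp (F t) * P t)
        (τ s * Real.exp (F s) * P s + Real.exp (F s) * (κ s * (s + c₀) * Real.exp (-F s))) s :=
      hE.mul hps
    have hEQ : HasDerivAt (fun t => Real.exp (-F t) * Q t)
        (-τ s * Real.exp (-F s) * Q s + Real.exp (-F s) * (κ s * (s + c₀) * Real.exp (F s))) s :=
      hEn.mul hqs
    have hee : Real.exp (F s) * Real.exp (-F s) = 1 := by
      rw [← Real.exp_add]; simp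
    refine ⟨by simpa using (hasDerivAt_id s).add_const c₀, ?_, ?_⟩
    · have := (((hE.const_mul (-c₁)).add (hEn.const_mul c₂)).sub
        (hEP.const_mul (1/2))).sub (hEQ.const_mul (1/2))
      have heq : -(κ s * (s + c₀)) - τ s *
            (c₁ * Real.exp (F s) + c₂ * Real.exp (-F s)
              + (1/2) * Real.exp (F s) * P s - (1/2) * Real.exp (-F s) * Q s)
          = -c₁ * (τ s * Real.exp (F s)) + c₂ * (-τ s * Real.exp (-F s)) -
        1 / 2 * (τ s * Real.exp (F s) * P s + Real.exp (F s) * (κ s * (s + c₀) * Real.exp (-F s))) -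
      1 / 2 * (-τ s * Real.exp (-F s) * Q s + Real.exp (-F s) * (κ s * (s + c₀) * Real.exp (F s))) := by
        linear_combination (κ s * (s + c₀)) * hee
      rw [heq]
      exact this.congr_of_eventuallyEq (Filter.Eventually.of_forall fun t => by simp only [Pi.add_apply, Pi.sub_apply]; ring)
    · have := (((hE.const_mul c₁).add (hEn.const_mul c₂)).add
        (hEP.const_mul (1/2))).sub (hEQ.const_mul (1/2))
      have heq : -(τ s *
            (-c₁ * Real.exp (F s) + c₂ * Real.exp (-F s)
              - (1/2) * Real.exp (F s) * P s - (1/2) * Real.exp (-F s) * Q s))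
          = c₁ * (τ s * Real.exp (F s)) + c₂ * (-τ s * Real.exp (-F s)) +
        1 / 2 * (τ s * Real.exp (F s) * P s + Real.exp (F s) * (κ s * (s + c₀) * Real.exp (-F s))) -
      1 / 2 * (-τ s * Real.exp (-F s) * Q s + Real.exp (-F s) * (κ s * (s + c₀) * Real.exp (F s))) := by
        ring
      rw [heq]
      exact this.congr_of_eventuallyEq (Filter.Eventually.of_forall fun t => by simp only [Pi.add_apply, Pi.sub_apply]; ring)
  · intro m₁ m₂ h₁ h₂
    rcases Set.eq_empty_or_nonempty I with hIe | ⟨s₀, hs₀⟩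
    · exact ⟨0, 0, by simp [hIe]⟩
    set c₁ : ℝ := (((m₂ s₀ - m₁ s₀) * Real.exp (-F s₀)) - P s₀) / 2 with hc₁
    set c₂ : ℝ := (((m₂ s₀ + m₁ s₀) * Real.exp (F s₀)) + Q s₀) / 2 with hc₂
    have key₁ : ∀ s ∈ I, (m₂ s - m₁ s) * Real.exp (-F s) - P s = 2 * c₁ := by
      intro s hs
      have hd : ∀ t ∈ I, HasDerivAt
          (fun u => (m₂ u - m₁ u) * Real.exp (-F u) - P u) 0 t := by
        intro t ht
        have hEn : HasDerivAt (fun u => Real.exp (-F u)) (-τ t * Real.exp (-F t)) t := by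
          simpa [mul_comm] using ((hF t ht).neg).exp
        have := (((h₂ t ht).sub (h₁ t ht)).mul hEn).sub (hP t ht)
        convert this using 1
        · rfl
        · rfl
        · rfl
        simp only [Pi.add_apply, Pi.sub_apply]
        ring
      have := const_of_deriv_zero hIconv hd hs hs₀
      rw [this, hc₁]; ring
    have key₂ : ∀ s ∈ I, (m₂ s + m₁ s) * Real.exp (F s) + Q s = 2 * c₂ := by
      intro s hs
      have hd : ∀ t ∈ I, HasDerivAt
          (fun u => (m₂ u + m₁ u) * Real.exp (F u) + Q u) 0 t := by
        intro t ht
        have hE : HasDerivAt (fun u => Real.exp (F u)) (τ t * Real.exp (F t)) t := by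
          simpa [mul_comm] using (hF t ht).exp
        have := (((h₂ t ht).add (h₁ t ht)).mul hE).add (hQ t ht)
        convert this using 1
        · rfl
        · rfl
        · rfl
        simp only [Pi.add_apply, Pi.sub_apply]
        ring
      have := const_of_deriv_zero hIconv hd hs hs₀
      rw [this, hc₂]; ring
    refine ⟨c₁, c₂, fun s hs => ?_⟩
    have hee : Real.exp (F s) * Real.exp (-F s) = 1 := by
      rw [← Real.exp_add]; simp
    have k₁ := key₁ s hs
    have k₂ := key₂ s hs
    have e₁ : m₂ s - m₁ s = (2 * c₁ + P s) * Real.exp (F s) := by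
      have : ((m₂ s - m₁ s) * Real.exp (-F s)) * Real.exp (F s)
          = (2 * c₁ + P s) * Real.exp (F s) := by rw [show (m₂ s - m₁ s) * Real.exp (-F s) = 2 * c₁ + P s by linarith]
      calc m₂ s - m₁ s = (m₂ s - m₁ s) * (Real.exp (-F s) * Real.exp (F s)) := by
            rw [mul_comm (Real.exp (-F s)), hee, mul_one]
        _ = (2 * c₁ + P s) * Real.exp (F s) := by rw [← mul_assoc]; exact this
    have e₂ : m₂ s + m₁ s = (2 * c₂ - Q s) * Real.exp (-F s) := by
      have : ((m₂ s + m₁ s) * Real.exp (F s)) * Real.exp (-F s)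
          = (2 * c₂ - Q s) * Real.exp (-F s) := by rw [show (m₂ s + m₁ s) * Real.exp (F s) = 2 * c₂ - Q s by linarith]
      calc m₂ s + m₁ s = (m₂ s + m₁ s) * (Real.exp (F s) * Real.exp (-F s)) := by
            rw [hee, mul_one]
        _ = (2 * c₂ - Q s) * Real.exp (-F s) := by rw [← mul_assoc]; exact this
    constructor <;> nlinarith [e₁, e₂]
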